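/- For almost every real number r (with respect to Lebesgue measure), the arithmetic mean (a_1(r) + ... + a_n(r))/n of the partial quotients of the continued fraction expansion of r tends to infinity as n → ∞. -/

import Mathlib

open MeasureTheory Filter Finset Set

/-- The Gauss map `T x = {1/x}` (fractional part of `1/x`). -/
noncomputable def gaussMap (x : ℝ) : ℝ := Int.fract x⁻¹

noncomputable def Sn (n : ℕ) (x : ℝ) : ℝ := ∑ k ∈ Finset.range n, ((⌊(gaussMap^[k] x)⁻¹⌋ : ℝ))

noncomputable def rho (z y : ℝ) : ℝ := (1 + z) / (1 + z * y) ^ 2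

lemma measurable_gaussMap : Measurable gaussMap := measurable_fract.comp measurable_inv

lemma measurable_digit : Measurable (fun x : ℝ => ((⌊x⁻¹⌋ : ℤ) : ℝ)) := by
  have : Measurable (fun n : ℤ => (n : ℝ)) := measurable_from_top
  exact this.comp (Int.measurable_floor.comp measurable_inv)

lemma measurable_Sn (n : ℕ) : Measurable (Sn n) := by
  apply Finset.measurable_sum
  intro k _
  exact measurable_digit.comp (measurable_gaussMap.iterate k)

lemma gaussMap_nonneg (x : ℝ) : 0 ≤ gaussMap x := Int.fract_nonneg _

lemma gaussMap_lt_one (x : ℝ) : gaussMap x < 1 := Int.fract_lt_one _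

lemma iter_nonneg {x : ℝ} (hx : 0 ≤ x) (k : ℕ) : 0 ≤ gaussMap^[k] x := by
  cases k with
  | zero => simpa using hx
  | succ m =>
    rw [Function.iterate_succ_apply']
    exact gaussMap_nonneg _

lemma Sn_nonneg {x : ℝ} (hx : 0 ≤ x) (n : ℕ) : 0 ≤ Sn n x := by
  apply Finset.sum_nonneg
  intro k _
  have h := iter_nonneg hx k
  have : (0:ℤ) ≤ ⌊(gaussMap^[k] x)⁻¹⌋ := Int.floor_nonneg.2 (by positivity)
  exact_mod_cast this

lemma Sn_succ (n : ℕ) (x : ℝ) :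
    Sn (n+1) x = ((⌊x⁻¹⌋ : ℤ) : ℝ) + Sn n (gaussMap x) := by
  rw [Sn, Finset.sum_range_succ']
  simp only [Sn, Function.iterate_succ_apply, Function.iterate_zero_apply]
  ring

lemma branch_digit {d : ℕ} (hd : 1 ≤ d) {u : ℝ} (hu : u ∈ Set.Ico (0:ℝ) 1) :
    (⌊(((d:ℝ) + u)⁻¹)⁻¹⌋ : ℤ) = d ∧ gaussMap (((d:ℝ) + u)⁻¹) = u := by
  obtain ⟨hu0, hu1⟩ := hu
  have hpos : (0:ℝ) < (d:ℝ) + u := by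
    have : (1:ℝ) ≤ (d:ℝ) := by exact_mod_cast hd
    linarith
  have hinv : (((d:ℝ) + u)⁻¹)⁻¹ = (d:ℝ) + u := inv_inv _
  constructor
  · rw [hinv]
    have h0 : ⌊u⌋ = 0 := Int.floor_eq_zero_iff.2 ⟨hu0, hu1⟩
    have : (d:ℝ) + u = ((d:ℤ) : ℝ) + u := by push_cast; ring
    rw [this, Int.floor_intCast_add, h0, add_zero]
  · rw [gaussMap, hinv]
    have : (d:ℝ) + u = ((d:ℤ) : ℝ) + u := by push_cast; ring
    rw [this, Int.fract_intCast_add, Int.fract_eq_self.2 ⟨hu0, hu1⟩]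

lemma Sn_branch {d : ℕ} (hd : 1 ≤ d) {u : ℝ} (hu : u ∈ Set.Ico (0:ℝ) 1) (n : ℕ) :
    Sn (n+1) (((d:ℝ) + u)⁻¹) = (d:ℝ) + Sn n u := by
  obtain ⟨h1, h2⟩ := branch_digit hd hu
  rw [Sn_succ, h1, h2]
  push_cast
  ring

-- ρ bounds
lemma rho_nonneg {z y : ℝ} (hz : z ∈ Set.Icc (0:ℝ) 1) (hy : 0 ≤ y) : 0 ≤ rho z y := by
  obtain ⟨hz0, hz1⟩ := hz
  have : (0:ℝ) < 1 + z * y := by nlinarith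
  rw [rho]; positivity

lemma rho_le_two {z y : ℝ} (hz : z ∈ Set.Icc (0:ℝ) 1) (hy : 0 ≤ y) : rho z y ≤ 2 := by
  obtain ⟨hz0, hz1⟩ := hz
  have h1 : (1:ℝ) ≤ 1 + z * y := by nlinarith
  have h2 : (1:ℝ) ≤ (1 + z * y) ^ 2 := by nlinarith
  rw [rho, div_le_iff₀ (by nlinarith)]
  nlinarith

noncomputable def FF (t : ℝ) (n : ℕ) (z : ℝ) : ℝ :=
  ∫ y in Set.Ioc (0:ℝ) 1, Real.exp (-(t * Sn n y)) * rho z y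

lemma integrand_meas (t : ℝ) (n : ℕ) (z : ℝ) :
    Measurable (fun y => Real.exp (-(t * Sn n y)) * rho z y) := by
  apply Measurable.mul
  · exact (Real.measurable_exp.comp ((measurable_Sn n).const_mul t).neg)
  · unfold rho
    apply Measurable.div measurable_const
    exact ((measurable_const.mul measurable_id).const_add 1).pow measurable_const

lemma integrand_nonneg {t : ℝ} (n : ℕ) {z : ℝ} (hz : z ∈ Set.Icc (0:ℝ) 1) {y : ℝ}
    (hy : 0 ≤ y) : 0 ≤ Real.exp (-(t * Sn n y)) * rho z y := by
  have := rho_nonneg hz hy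
  positivity

lemma integrand_le_two {t : ℝ} (ht : 0 ≤ t) (n : ℕ) {z : ℝ} (hz : z ∈ Set.Icc (0:ℝ) 1) {y : ℝ}
    (hy : 0 ≤ y) : Real.exp (-(t * Sn n y)) * rho z y ≤ 2 := by
  have h1 : Real.exp (-(t * Sn n y)) ≤ 1 := by
    rw [Real.exp_le_one_iff]
    have := Sn_nonneg hy n
    nlinarith
  have h2 := rho_le_two hz hy
  have h3 := rho_nonneg hz hy
  nlinarith [Real.exp_pos (-(t * Sn n y))]

lemma integrand_integrableOn {t : ℝ} (ht : 0 ≤ t) (n : ℕ) {z : ℝ} (hz : z ∈ Set.Icc (0:ℝ) 1)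
    {s : Set ℝ} (hs : s ⊆ Set.Ioc 0 1) (hsm : MeasurableSet s) :
    IntegrableOn (fun y => Real.exp (-(t * Sn n y)) * rho z y) s := by
  apply Measure.integrableOn_of_bounded (M := 2)
  · exact ((measure_mono hs).trans_lt (by simp [Real.volume_Ioc])).ne
  · exact (integrand_meas t n z).aestronglyMeasurable
  · filter_upwards [ae_restrict_mem hsm] with y hy
    have hy' : 0 ≤ y := (hs hy).1.le
    rw [Real.norm_eq_abs, abs_of_nonneg (integrand_nonneg n hz hy')]
    exact integrand_le_two ht n hz hy'

lemma FF_nonneg {t : ℝ} (n : ℕ) {z : ℝ} (hz : z ∈ Set.Icc (0:ℝ) 1) : 0 ≤ FF t n z := by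
  apply setIntegral_nonneg measurableSet_Ioc
  intro y hy
  exact integrand_nonneg n hz hy.1.le

lemma FF_le_two {t : ℝ} (ht : 0 ≤ t) (n : ℕ) {z : ℝ} (hz : z ∈ Set.Icc (0:ℝ) 1) :
    FF t n z ≤ 2 := by
  have h := setIntegral_mono_on (μ := volume) (s := Set.Ioc (0:ℝ) 1)
    (integrand_integrableOn ht n hz (subset_refl _) measurableSet_Ioc)
    (integrableOn_const (by simp [Real.volume_Ioc]))
    measurableSet_Ioc (fun y hy => integrand_le_two ht n hz hy.1.le)
  calc FF t n z ≤ ∫ _ in Set.Ioc (0:ℝ) 1, (2:ℝ) := h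
    _ = 2 := by simp [Real.volume_Ioc]

lemma image_phi {d : ℝ} (hd : 1 ≤ d) :
    (fun u => (d + u)⁻¹) '' Set.Ioo (0:ℝ) 1 = Set.Ioo (d+1)⁻¹ d⁻¹ := by
  ext y
  constructor
  · rintro ⟨u, ⟨hu0, hu1⟩, rfl⟩
    constructor
    · rw [inv_lt_inv₀ (by linarith) (by linarith)]; linarith
    · rw [inv_lt_inv₀ (by linarith) (by linarith)]; linarith
  · rintro ⟨hy1, hy2⟩
    have hy0 : 0 < y := lt_trans (by positivity) hy1
    refine ⟨y⁻¹ - d, ⟨?_, ?_⟩, ?_⟩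
    · have : d < y⁻¹ := by
        rw [← inv_inv d, inv_lt_inv₀ (by positivity) (by positivity)]
        exact hy2
      linarith
    · have : y⁻¹ < d + 1 := by
        rw [← inv_inv (d+1), inv_lt_inv₀ (by positivity) (by positivity)]
        exact hy1
      linarith
    · show (d + (y⁻¹ - d))⁻¹ = y
      rw [show d + (y⁻¹ - d) = y⁻¹ by ring, inv_inv]

lemma iUnion_branches :
    (⋃ j : ℕ, Set.Ioc (((j:ℝ)+2))⁻¹ (((j:ℝ)+1))⁻¹) = Set.Ioc (0:ℝ) 1 := by
  ext y
  simp only [Set.mem_iUnion, Set.mem_Ioc]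
  constructor
  · rintro ⟨j, h1, h2⟩
    have hj2 : (0:ℝ) < (j:ℝ)+2 := by positivity
    constructor
    · exact lt_trans (by positivity) h1
    · calc y ≤ ((j:ℝ)+1)⁻¹ := h2
        _ ≤ 1 := by rw [inv_le_one_iff₀]; right; linarith
  · rintro ⟨hy0, hy1⟩
    have hyi : (1:ℝ) ≤ y⁻¹ := by
      rw [le_inv_comm₀ (by norm_num) hy0]; simpa using hy1
    set m : ℤ := ⌊y⁻¹⌋ with hm
    have hm1 : (1:ℤ) ≤ m := by
      rw [hm]; exact_mod_cast Int.le_floor.2 (by exact_mod_cast hyi)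
    refine ⟨(m-1).toNat, ?_, ?_⟩
    · have hcast : (((m-1).toNat : ℝ) + 2) = (m:ℝ) + 1 := by
        have : ((m-1).toNat : ℤ) = m - 1 := Int.toNat_of_nonneg (by omega)
        have h2 : (((m-1).toNat : ℝ)) = (m:ℝ) - 1 := by exact_mod_cast this
        rw [h2]; ring
      rw [hcast]
      have hlt : y⁻¹ < (m:ℝ) + 1 := Int.lt_floor_add_one _
      rw [← inv_inv y, inv_lt_inv₀ (by positivity) (by positivity)]
      exact hlt
    · have hcast : (((m-1).toNat : ℝ) + 1) = (m:ℝ) := by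
        have : ((m-1).toNat : ℤ) = m - 1 := Int.toNat_of_nonneg (by omega)
        have h2 : (((m-1).toNat : ℝ)) = (m:ℝ) - 1 := by exact_mod_cast this
        rw [h2]; ring
      rw [hcast]
      have hle : (m:ℝ) ≤ y⁻¹ := Int.floor_le _
      have hmpos : (0:ℝ) < (m:ℝ) := by exact_mod_cast hm1
      calc y = (y⁻¹)⁻¹ := (inv_inv y).symm
        _ ≤ (m:ℝ)⁻¹ := by
            rw [inv_le_inv₀ (by positivity) hmpos]; exact hle

lemma branch_integral {t : ℝ} (ht : 0 ≤ t) (n : ℕ) {z : ℝ} (hz : z ∈ Set.Icc (0:ℝ) 1) (j : ℕ) :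
    ∫ y in Set.Ioc (((j:ℝ)+2))⁻¹ (((j:ℝ)+1))⁻¹, Real.exp (-(t * Sn (n+1) y)) * rho z y
    = Real.exp (-(t * ((j:ℝ)+1))) * ((1+z)/((((j:ℝ)+1)+z)*(((j:ℝ)+2)+z)))
        * FF t n ((((j:ℝ)+1)+z)⁻¹) := by
  obtain ⟨hz0, hz1⟩ := hz
  set d : ℝ := (j:ℝ) + 1 with hd_def
  have hd : 1 ≤ d := by simp [hd_def]
  have hd0 : 0 < d := by linarith
  have hj2 : ((j:ℝ)+2) = d + 1 := by rw [hd_def]; ring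
  rw [hj2, integral_Ioc_eq_integral_Ioo, ← image_phi hd]
  rw [integral_image_eq_integral_abs_deriv_smul measurableSet_Ioo
    (f' := fun x => -1/((d+x)^2))
    (fun x hx => by
      have h1 : HasDerivAt (fun u : ℝ => d + u) 1 x := (hasDerivAt_id x).const_add d
      have h2 : d + x ≠ 0 := by have := hx.1; positivity
      have := h1.inv h2
      simpa [one_pow, Pi.inv_def] using this.hasDerivWithinAt)
    (fun u hu v hv h => by
      have : d + u = d + v := inv_injective h
      linarith)]
  have hcongr : ∀ x ∈ Set.Ioo (0:ℝ) 1,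
      |(-1/((d+x)^2))| • (Real.exp (-(t * Sn (n+1) ((d+x)⁻¹))) * rho z ((d+x)⁻¹))
      = (Real.exp (-(t * d)) * ((1+z)/((d+z)*(d+1+z))))
          * (Real.exp (-(t * Sn n x)) * rho ((d+z)⁻¹) x) := by
    intro x hx
    obtain ⟨hx0, hx1⟩ := hx
    have hdx : 0 < d + x := by linarith
    have hdz : 0 < d + z := by linarith
    have habs : |(-1/((d+x)^2))| = 1/((d+x)^2) := by
      rw [abs_div, abs_neg, abs_one, abs_of_nonneg (by positivity)]
    have hSn : Sn (n+1) ((d+x)⁻¹) = d + Sn n x := by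
      have hcast : d = (((j+1 : ℕ)):ℝ) := by rw [hd_def]; push_cast; ring
      rw [hcast]
      exact Sn_branch (by omega) ⟨hx0.le, hx1⟩ n
    rw [smul_eq_mul, habs, hSn]
    have hexp : Real.exp (-(t * (d + Sn n x)))
        = Real.exp (-(t * d)) * Real.exp (-(t * Sn n x)) := by
      rw [← Real.exp_add]; ring_nf
    rw [hexp]
    have halg : 1/((d+x)^2) * rho z ((d+x)⁻¹)
        = ((1+z)/((d+z)*(d+1+z))) * rho ((d+z)⁻¹) x := by
      rw [rho, rho]
      have h1 : (1 + z * (d+x)⁻¹) = (d + x + z) / (d + x) := by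
        field_simp
      have h2 : (1 + (d+z)⁻¹ * x) = (d + z + x) / (d + z) := by
        field_simp
      have h3 : (1 + (d+z)⁻¹) = (d + z + 1) / (d + z) := by
        field_simp
      have hdxz : 0 < d + x + z := by linarith
      have hdzx : 0 < d + z + x := by linarith
      have hdz1 : 0 < d + 1 + z := by linarith
      rw [h1, h2, h3, div_pow, div_pow]
      field_simp
      ring
    calc 1/((d+x)^2) * (Real.exp (-(t * d)) * Real.exp (-(t * Sn n x)) * rho z ((d+x)⁻¹))
        = (Real.exp (-(t * d)) * Real.exp (-(t * Sn n x))) * (1/((d+x)^2) * rho z ((d+x)⁻¹)) := by ring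
      _ = (Real.exp (-(t * d)) * Real.exp (-(t * Sn n x))) * (((1+z)/((d+z)*(d+1+z))) * rho ((d+z)⁻¹) x) := by rw [halg]
      _ = (Real.exp (-(t * d)) * ((1+z)/((d+z)*(d+1+z)))) * (Real.exp (-(t * Sn n x)) * rho ((d+z)⁻¹) x) := by ring
  rw [setIntegral_congr_fun measurableSet_Ioo hcongr, MeasureTheory.integral_const_mul,
    ← integral_Ioc_eq_integral_Ioo]
  rfl

lemma branches_disjoint : Pairwise (Function.onFun Disjoint
    (fun j : ℕ => Set.Ioc (((j:ℝ)+2))⁻¹ (((j:ℝ)+1))⁻¹)) := by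
  intro i j hij
  have key : ∀ i j : ℕ, i < j → Disjoint (Set.Ioc (((i:ℝ)+2))⁻¹ (((i:ℝ)+1))⁻¹)
      (Set.Ioc (((j:ℝ)+2))⁻¹ (((j:ℝ)+1))⁻¹) := by
    intro i j h
    apply Set.Ioc_disjoint_Ioc.2
    have h1 : ((j:ℝ)+1)⁻¹ ≤ ((i:ℝ)+2)⁻¹ := by
      rw [inv_le_inv₀ (by positivity) (by positivity)]
      exact_mod_cast by omega
    calc min (((i:ℝ)+1))⁻¹ (((j:ℝ)+1))⁻¹ ≤ (((j:ℝ)+1))⁻¹ := min_le_right _ _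
      _ ≤ ((i:ℝ)+2)⁻¹ := h1
      _ ≤ max (((i:ℝ)+2))⁻¹ (((j:ℝ)+2))⁻¹ := le_max_left _ _
  rcases lt_or_gt_of_ne hij with h | h
  · exact key i j h
  · exact (key j i h).symm

lemma FF_succ {t : ℝ} (ht : 0 ≤ t) (n : ℕ) {z : ℝ} (hz : z ∈ Set.Icc (0:ℝ) 1) :
    FF t (n+1) z = ∑' j : ℕ, Real.exp (-(t * ((j:ℝ)+1)))
      * ((1+z)/((((j:ℝ)+1)+z)*(((j:ℝ)+2)+z))) * FF t n ((((j:ℝ)+1)+z)⁻¹) := by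
  have hdecomp : FF t (n+1) z
      = ∑' j : ℕ, ∫ y in Set.Ioc (((j:ℝ)+2))⁻¹ (((j:ℝ)+1))⁻¹,
          Real.exp (-(t * Sn (n+1) y)) * rho z y := by
    rw [FF, ← iUnion_branches]
    apply integral_iUnion (fun j => measurableSet_Ioc) branches_disjoint
    rw [iUnion_branches]
    exact integrand_integrableOn ht (n+1) hz (subset_refl _) measurableSet_Ioc
  rw [hdecomp]
  exact tsum_congr (fun j => branch_integral ht n hz j)

lemma summable_coeff {t : ℝ} (ht : 0 < t) {z : ℝ} (hz : z ∈ Set.Icc (0:ℝ) 1) {C : ℝ} (hC : 0 ≤ C) :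
    Summable (fun j : ℕ => Real.exp (-(t * ((j:ℝ)+1)))
      * ((1+z)/((((j:ℝ)+1)+z)*(((j:ℝ)+2)+z))) * C) := by
  obtain ⟨hz0, hz1⟩ := hz
  apply Summable.of_nonneg_of_le (f := fun j : ℕ => (2*C) * Real.exp (-t) ^ j)
  · intro j
    have h1 : (0:ℝ) < ((j:ℝ)+1)+z := by positivity
    have h2 : (0:ℝ) < ((j:ℝ)+2)+z := by positivity
    positivity
  · intro j
    have hj0 : (0:ℝ) ≤ (j:ℝ) := by positivity
    have h1 : (1:ℝ) ≤ ((j:ℝ)+1)+z := by linarith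
    have h2 : (1:ℝ) ≤ ((j:ℝ)+2)+z := by linarith
    have hfrac : (1+z)/((((j:ℝ)+1)+z)*(((j:ℝ)+2)+z)) ≤ 2 := by
      rw [div_le_iff₀ (by nlinarith)]
      nlinarith
    have hexp : Real.exp (-(t * ((j:ℝ)+1))) ≤ Real.exp (-t) ^ j := by
      rw [← Real.exp_nat_mul]
      apply Real.exp_le_exp.2
      have : (0:ℝ) ≤ (j:ℝ) := by positivity
      nlinarith
    have he0 : (0:ℝ) < Real.exp (-(t * ((j:ℝ)+1))) := Real.exp_pos _
    have hfrac0 : (0:ℝ) ≤ (1+z)/((((j:ℝ)+1)+z)*(((j:ℝ)+2)+z)) := by positivity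
    have hp0 : (0:ℝ) ≤ Real.exp (-t) ^ j := by positivity
    calc Real.exp (-(t * ((j:ℝ)+1))) * ((1+z)/((((j:ℝ)+1)+z)*(((j:ℝ)+2)+z))) * C
        ≤ Real.exp (-t) ^ j * 2 * C := by
          apply mul_le_mul_of_nonneg_right _ hC
          exact mul_le_mul hexp hfrac hfrac0 hp0
      _ = (2*C) * Real.exp (-t) ^ j := by ring
  · apply Summable.mul_left
    apply summable_geometric_of_lt_one (by positivity)
    rw [Real.exp_lt_one_iff]
    linarith

lemma FF_le {t σ : ℝ} (ht : 0 < t) (hσ0 : 0 ≤ σ)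
    (hσ : ∀ z ∈ Set.Icc (0:ℝ) 1, ∑' j : ℕ, Real.exp (-(t * ((j:ℝ)+1)))
      * ((1+z)/((((j:ℝ)+1)+z)*(((j:ℝ)+2)+z))) ≤ σ) :
    ∀ n, ∀ z ∈ Set.Icc (0:ℝ) 1, FF t n z ≤ 2 * σ ^ n := by
  intro n
  induction n with
  | zero => intro z hz; simpa using FF_le_two ht.le 0 hz
  | succ n ih =>
    intro z hz
    obtain ⟨hz0, hz1⟩ := hz
    rw [FF_succ ht.le n ⟨hz0, hz1⟩]
    have hzmem : ∀ j : ℕ, (((j:ℝ)+1)+z)⁻¹ ∈ Set.Icc (0:ℝ) 1 := by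
      intro j
      constructor
      · positivity
      · apply inv_le_one_of_one_le₀
        have : (0:ℝ) ≤ (j:ℝ) := by positivity
        linarith
    have hterm : ∀ j : ℕ, Real.exp (-(t * ((j:ℝ)+1)))
          * ((1+z)/((((j:ℝ)+1)+z)*(((j:ℝ)+2)+z))) * FF t n ((((j:ℝ)+1)+z)⁻¹)
        ≤ Real.exp (-(t * ((j:ℝ)+1))) * ((1+z)/((((j:ℝ)+1)+z)*(((j:ℝ)+2)+z))) * (2 * σ ^ n) := by
      intro j
      apply mul_le_mul_of_nonneg_left (ih _ (hzmem j))
      have h1 : (0:ℝ) < ((j:ℝ)+1)+z := by positivity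
      have h2 : (0:ℝ) < ((j:ℝ)+2)+z := by positivity
      positivity
    have hsum1 : Summable (fun j : ℕ => Real.exp (-(t * ((j:ℝ)+1)))
        * ((1+z)/((((j:ℝ)+1)+z)*(((j:ℝ)+2)+z))) * FF t n ((((j:ℝ)+1)+z)⁻¹)) := by
      apply Summable.of_nonneg_of_le _ hterm
        ((summable_coeff ht ⟨hz0, hz1⟩ (by positivity)))
      intro j
      have h1 : (0:ℝ) < ((j:ℝ)+1)+z := by positivity
      have h2 : (0:ℝ) < ((j:ℝ)+2)+z := by positivity
      have := FF_nonneg (t := t) n (hzmem j)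
      positivity
    calc (∑' j : ℕ, Real.exp (-(t * ((j:ℝ)+1)))
          * ((1+z)/((((j:ℝ)+1)+z)*(((j:ℝ)+2)+z))) * FF t n ((((j:ℝ)+1)+z)⁻¹))
        ≤ ∑' j : ℕ, Real.exp (-(t * ((j:ℝ)+1)))
          * ((1+z)/((((j:ℝ)+1)+z)*(((j:ℝ)+2)+z))) * (2 * σ ^ n) :=
          Summable.tsum_le_tsum hterm hsum1 (summable_coeff ht ⟨hz0, hz1⟩ (by positivity))
      _ = (∑' j : ℕ, Real.exp (-(t * ((j:ℝ)+1)))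
          * ((1+z)/((((j:ℝ)+1)+z)*(((j:ℝ)+2)+z)))) * (2 * σ ^ n) := tsum_mul_right
      _ ≤ σ * (2 * σ ^ n) := by
          apply mul_le_mul_of_nonneg_right (hσ z ⟨hz0, hz1⟩) (by positivity)
      _ = 2 * σ ^ (n+1) := by ring

lemma exists_good_t (A : ℝ) (hA : 0 < A) : ∃ t : ℝ, 0 < t ∧
    ∀ z ∈ Set.Icc (0:ℝ) 1,
      (∑' j : ℕ, Real.exp (-(t * ((j:ℝ)+1))) * ((1+z)/((((j:ℝ)+1)+z)*(((j:ℝ)+2)+z))))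
        ≤ Real.exp (-(t * A)) := by
  -- choose J
  have hdiv : Tendsto (fun J : ℕ => ∑ j ∈ Finset.range J, (1:ℝ)/((j:ℝ)+1)) atTop atTop :=
    Real.tendsto_sum_range_one_div_nat_succ_atTop
  obtain ⟨J, hJ⟩ := ((hdiv.eventually_ge_atTop (12*A)).and (eventually_ge_atTop 1)).exists
  obtain ⟨hJsum, hJ1⟩ := hJ
  have hJpos : (0:ℝ) < (J:ℝ) := by exact_mod_cast hJ1
  set t : ℝ := Real.log 2 / (J:ℝ) with ht_def
  have hlog2 : (0:ℝ) < Real.log 2 := Real.log_pos (by norm_num)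
  have ht : 0 < t := by positivity
  refine ⟨t, ht, ?_⟩
  intro z hz
  obtain ⟨hz0, hz1⟩ := hz
  set e : ℕ → ℝ := fun j => Real.exp (-(t * ((j:ℝ)+1))) with he_def
  set r : ℕ → ℝ := fun j => (1+z)/((((j:ℝ)+1)+z)*(((j:ℝ)+2)+z)) with hr_def
  have hrpos : ∀ j, 0 ≤ r j := by
    intro j
    have h1 : (0:ℝ) < ((j:ℝ)+1)+z := by positivity
    have h2 : (0:ℝ) < ((j:ℝ)+2)+z := by positivity
    rw [hr_def]; positivity
  have hepos : ∀ j, 0 < e j := fun j => Real.exp_pos _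
  have hele : ∀ j, e j ≤ 1 := by
    intro j
    rw [he_def, Real.exp_le_one_iff]
    have : (0:ℝ) ≤ (j:ℝ) := by positivity
    nlinarith
  -- HasSum r 1
  have hg : ∀ j : ℕ, r j = (1+z)/((j:ℝ)+1+z) - (1+z)/((j:ℝ)+1+1+z) := by
    intro j
    have h1 : (0:ℝ) < ((j:ℝ)+1)+z := by positivity
    have h2 : (0:ℝ) < ((j:ℝ)+2)+z := by positivity
    rw [hr_def]
    field_simp
    ring
  have hsum_r : HasSum r 1 := by
    rw [hasSum_iff_tendsto_nat_of_nonneg hrpos]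
    have hps : ∀ n : ℕ, ∑ j ∈ Finset.range n, r j = 1 - (1+z)/((n:ℝ)+1+z) := by
      intro n
      have : ∑ j ∈ Finset.range n, r j
          = ∑ j ∈ Finset.range n, ((fun i : ℕ => (1+z)/((i:ℝ)+1+z)) j
            - (fun i : ℕ => (1+z)/((i:ℝ)+1+z)) (j+1)) := by
        apply Finset.sum_congr rfl
        intro j _
        rw [hg j]
        push_cast
        ring_nf
      rw [this, Finset.sum_range_sub' (fun i : ℕ => (1+z)/((i:ℝ)+1+z)) n]
      have : (1+z)/((0:ℝ)+1+z) = 1 := by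
        rw [div_eq_one_iff_eq (by positivity)]
        ring
      push_cast
      rw [this]
    simp_rw [hps]
    have : Tendsto (fun n : ℕ => (1+z)/((n:ℝ)+1+z)) atTop (nhds 0) := by
      apply Tendsto.div_atTop tendsto_const_nhds
      have h := tendsto_atTop_add_const_right atTop (1+z) tendsto_natCast_atTop_atTop
      apply h.congr
      intro n
      ring
    have h2 : Tendsto (fun n : ℕ => 1 - (1+z)/((n:ℝ)+1+z)) atTop (nhds (1 - 0)) :=
      Tendsto.sub tendsto_const_nhds this
    simpa using h2
  have hsummable_er : Summable (fun j => e j * r j) := by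
    have := summable_coeff ht ⟨hz0, hz1⟩ (C := 1) zero_le_one
    simpa [he_def, hr_def, mul_one] using this
  -- split
  have hsub : (∑' j, e j * r j) = 1 - ∑' j, (1 - e j) * r j := by
    have h1 : ∀ j, (1 - e j) * r j = r j - e j * r j := fun j => by ring
    have h2 : Summable (fun j => (1 - e j) * r j) := by
      simp_rw [h1]
      exact hsum_r.summable.sub hsummable_er
    have h3 : (∑' j, (1 - e j) * r j) = 1 - ∑' j, e j * r j := by
      simp_rw [h1]
      rw [Summable.tsum_sub hsum_r.summable hsummable_er, hsum_r.tsum_eq]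
    linarith [h3]
  rw [hsub]
  -- lower bound the deficit
  have hD : t * A ≤ ∑' j, (1 - e j) * r j := by
    have hsummD : Summable (fun j => (1 - e j) * r j) := by
      have h1 : ∀ j, (1 - e j) * r j = r j - e j * r j := fun j => by ring
      simp_rw [h1]
      exact hsum_r.summable.sub hsummable_er
    have hfin : ∑ j ∈ Finset.range J, (1 - e j) * r j ≤ ∑' j, (1 - e j) * r j := by
      apply Summable.sum_le_tsum _ _ hsummD
      intro j _
      have := hele j
      have := hrpos j
      nlinarith
    refine le_trans ?_ hfin
    have hterm : ∀ j ∈ Finset.range J, (t/2) * (((j:ℝ)+1)/((((j:ℝ)+2))*(((j:ℝ)+3))))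
        ≤ (1 - e j) * r j := by
      intro j hj
      have hjJ : (j:ℝ) + 1 ≤ (J:ℝ) := by
        rw [Finset.mem_range] at hj
        exact_mod_cast hj
      have hs : 0 ≤ t * ((j:ℝ)+1) := by positivity
      -- e j ≥ 1/2
      have he_half : (1/2 : ℝ) ≤ e j := by
        rw [he_def]
        have harg : t * ((j:ℝ)+1) ≤ Real.log 2 := by
          rw [ht_def]
          rw [div_mul_eq_mul_div, div_le_iff₀ hJpos]
          nlinarith
        calc (1/2 : ℝ) = Real.exp (-(Real.log 2)) := by
              rw [Real.exp_neg, Real.exp_log (by norm_num)]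
              norm_num
        _ ≤ Real.exp (-(t * ((j:ℝ)+1))) := Real.exp_le_exp.2 (by linarith)
      -- 1 - e j ≥ t(j+1) e j ≥ t(j+1)/2
      have hone : t * ((j:ℝ)+1) * e j + e j ≤ 1 := by
        have := Real.add_one_le_exp (t * ((j:ℝ)+1))
        have hmul := mul_le_mul_of_nonneg_right this (hepos j).le
        rw [he_def] at *
        rw [← Real.exp_add] at hmul
        simp only [add_neg_cancel, Real.exp_zero] at hmul
        nlinarith [Real.exp_pos (-(t * ((j:ℝ)+1)))]
      have h1e : t * ((j:ℝ)+1) / 2 ≤ 1 - e j := by nlinarith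
      -- r j ≥ 1/((j+2)(j+3))
      have hrlow : (1:ℝ)/((((j:ℝ)+2))*(((j:ℝ)+3))) ≤ r j := by
        rw [hr_def]
        apply div_le_div₀ (by linarith) (by linarith) (by positivity)
        nlinarith
      have h1e0 : 0 ≤ 1 - e j := by nlinarith [hele j]
      have hr0 : (0:ℝ) ≤ (1:ℝ)/((((j:ℝ)+2))*(((j:ℝ)+3))) := by positivity
      calc (t/2) * (((j:ℝ)+1)/((((j:ℝ)+2))*(((j:ℝ)+3))))
          = (t * ((j:ℝ)+1) / 2) * ((1:ℝ)/((((j:ℝ)+2))*(((j:ℝ)+3)))) := by ring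
        _ ≤ (1 - e j) * r j := mul_le_mul h1e hrlow hr0 h1e0
    have hsumlow : ∑ j ∈ Finset.range J, (t/2) * (((j:ℝ)+1)/((((j:ℝ)+2))*(((j:ℝ)+3))))
        ≤ ∑ j ∈ Finset.range J, (1 - e j) * r j := Finset.sum_le_sum hterm
    refine le_trans ?_ hsumlow
    -- t*A ≤ (t/2) * H with H ≥ 2A
    have hH : 2*A ≤ ∑ j ∈ Finset.range J, (((j:ℝ)+1)/((((j:ℝ)+2))*(((j:ℝ)+3)))) := by
      have hcomp : ∀ j ∈ Finset.range J, (1/6) * ((1:ℝ)/((j:ℝ)+1))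
          ≤ (((j:ℝ)+1)/((((j:ℝ)+2))*(((j:ℝ)+3)))) := by
        intro j _
        have hj0 : (0:ℝ) ≤ (j:ℝ) := by positivity
        have heq : (1/6 : ℝ) * ((1:ℝ)/((j:ℝ)+1)) = 1/(6*((j:ℝ)+1)) := by
          rw [div_mul_div_comm]
          norm_num
        rw [heq, div_le_div_iff₀ (by positivity) (by positivity)]
        nlinarith
      calc 2*A = (1/6) * (12*A) := by ring
        _ ≤ (1/6) * ∑ j ∈ Finset.range J, (1:ℝ)/((j:ℝ)+1) := by
            apply mul_le_mul_of_nonneg_left hJsum (by norm_num)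
        _ = ∑ j ∈ Finset.range J, (1/6) * ((1:ℝ)/((j:ℝ)+1)) := by
            rw [Finset.mul_sum]
        _ ≤ _ := Finset.sum_le_sum hcomp
    calc t * A = (t/2) * (2*A) := by ring
      _ ≤ (t/2) * ∑ j ∈ Finset.range J, (((j:ℝ)+1)/((((j:ℝ)+2))*(((j:ℝ)+3)))) := by
          apply mul_le_mul_of_nonneg_left hH (by positivity)
      _ = ∑ j ∈ Finset.range J, (t/2) * (((j:ℝ)+1)/((((j:ℝ)+2))*(((j:ℝ)+3)))) := by
          rw [Finset.mul_sum]
  -- 1 - D ≤ exp(-(t*A))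
  have := Real.add_one_le_exp (-(t*A))
  linarith

lemma rho_zero (y : ℝ) : rho 0 y = 1 := by
  rw [rho]
  norm_num

lemma measure_bad_le (M : ℕ) : ∃ t : ℝ, 0 < t ∧ ∀ n : ℕ,
    volume {x | x ∈ Set.Ioc (0:ℝ) 1 ∧ Sn n x ≤ (M:ℝ)*n}
      ≤ ENNReal.ofReal (2 * Real.exp (-(t*n))) := by
  obtain ⟨t, ht, hσ⟩ := exists_good_t (2*(M:ℝ)+2) (by positivity)
  set σ : ℝ := Real.exp (-(t * (2*(M:ℝ)+2))) with hσ_def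
  have hσ0 : 0 < σ := Real.exp_pos _
  have hFF := FF_le ht hσ0.le hσ
  refine ⟨t, ht, ?_⟩
  intro n
  set E : Set ℝ := {x | x ∈ Set.Ioc (0:ℝ) 1 ∧ Sn n x ≤ (M:ℝ)*n} with hE_def
  have hEmeas : MeasurableSet E := by
    apply MeasurableSet.inter measurableSet_Ioc
    exact measurableSet_le (measurable_Sn n) measurable_const
  have hEsub : E ⊆ Set.Ioc 0 1 := fun x hx => hx.1
  have hEfin : volume E ≠ ⊤ :=
    ((measure_mono hEsub).trans_lt (by simp [Real.volume_Ioc])).ne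
  -- lower bound the integral on E
  have hlow : Real.exp (-(t*((M:ℝ)*n))) * (volume E).toReal
      ≤ FF t n 0 := by
    have h0mem : (0:ℝ) ∈ Set.Icc (0:ℝ) 1 := by norm_num
    have hint : IntegrableOn (fun y => Real.exp (-(t * Sn n y)) * rho 0 y) E := by
      exact (integrand_integrableOn ht.le n h0mem hEsub hEmeas)
    have h1 : ∫ y in E, Real.exp (-(t*((M:ℝ)*n))) ≤
        ∫ y in E, Real.exp (-(t * Sn n y)) * rho 0 y := by
      apply setIntegral_mono_on (integrableOn_const hEfin) hint hEmeas
      intro y hy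
      rw [rho_zero, mul_one]
      exact Real.exp_le_exp.2 (by nlinarith [hy.2, ht])
    have h2 : ∫ y in E, Real.exp (-(t * Sn n y)) * rho 0 y ≤ FF t n 0 := by
      rw [FF]
      apply setIntegral_mono_set (integrand_integrableOn ht.le n h0mem (subset_refl _) measurableSet_Ioc)
      · filter_upwards [ae_restrict_mem measurableSet_Ioc] with y hy
        exact integrand_nonneg n h0mem hy.1.le
      · exact HasSubset.Subset.eventuallyLE hEsub
    calc Real.exp (-(t*((M:ℝ)*n))) * (volume E).toReal
        = ∫ y in E, Real.exp (-(t*((M:ℝ)*n))) := by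
          rw [setIntegral_const, smul_eq_mul, mul_comm, Measure.real]
      _ ≤ _ := h1.trans h2
  have hup : FF t n 0 ≤ 2 * σ ^ n := hFF n 0 (by norm_num)
  -- conclude
  have hkey : (volume E).toReal ≤ 2 * Real.exp (-(t*n)) := by
    have hexp_pos : (0:ℝ) < Real.exp (-(t*((M:ℝ)*n))) := Real.exp_pos _
    have h3 : (volume E).toReal ≤ 2 * σ ^ n * Real.exp (t*((M:ℝ)*n)) := by
      have hh := hlow.trans hup
      calc (volume E).toReal
          = Real.exp (t*((M:ℝ)*n)) * (Real.exp (-(t*((M:ℝ)*n))) * (volume E).toReal) := by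
            rw [← mul_assoc, ← Real.exp_add]
            simp
        _ ≤ Real.exp (t*((M:ℝ)*n)) * (2 * σ ^ n) :=
            mul_le_mul_of_nonneg_left hh (Real.exp_pos _).le
        _ = 2 * σ ^ n * Real.exp (t*((M:ℝ)*n)) := by ring
    have h4 : σ ^ n * Real.exp (t*((M:ℝ)*n)) ≤ Real.exp (-(t*n)) := by
      rw [hσ_def, ← Real.exp_nat_mul, ← Real.exp_add]
      apply Real.exp_le_exp.2
      have hn0 : (0:ℝ) ≤ (n:ℝ) := by positivity
      have hM0 : (0:ℝ) ≤ (M:ℝ) := by positivity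
      nlinarith [mul_nonneg (mul_nonneg ht.le hn0) hM0, mul_nonneg ht.le hn0]
    nlinarith [pow_nonneg hσ0.le n, Real.exp_pos (t*((M:ℝ)*n))]
  calc volume E = ENNReal.ofReal (volume E).toReal := (ENNReal.ofReal_toReal hEfin).symm
    _ ≤ ENNReal.ofReal (2 * Real.exp (-(t*n))) := ENNReal.ofReal_le_ofReal hkey

lemma ae_eventually_gt (M : ℕ) :
    ∀ᵐ x : ℝ, x ∈ Set.Ioc (0:ℝ) 1 → ∀ᶠ n in atTop, (M:ℝ)*n < Sn n x := by
  obtain ⟨t, ht, hbound⟩ := measure_bad_le M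
  set E : ℕ → Set ℝ := fun n => {x | x ∈ Set.Ioc (0:ℝ) 1 ∧ Sn n x ≤ (M:ℝ)*n} with hE_def
  have hlimsup : volume (limsup E atTop) = 0 := by
    apply measure_limsup_atTop_eq_zero
    have hgeo : ∀ n : ℕ, ENNReal.ofReal (2 * Real.exp (-(t*n)))
        ≤ ENNReal.ofReal 2 * (ENNReal.ofReal (Real.exp (-t))) ^ n := by
      intro n
      rw [← ENNReal.ofReal_pow (Real.exp_pos _).le, ← ENNReal.ofReal_mul (by norm_num)]
      apply ENNReal.ofReal_le_ofReal
      rw [← Real.exp_nat_mul]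
      apply mul_le_mul_of_nonneg_left _ (by norm_num)
      apply Real.exp_le_exp.2
      nlinarith [Nat.cast_nonneg (α := ℝ) n]
    have hsum : (∑' n : ℕ, ENNReal.ofReal 2 * (ENNReal.ofReal (Real.exp (-t))) ^ n) ≠ ⊤ := by
      rw [ENNReal.tsum_mul_left, ENNReal.tsum_geometric]
      apply ENNReal.mul_ne_top (by simp)
      rw [ENNReal.inv_ne_top]
      have : ENNReal.ofReal (Real.exp (-t)) < 1 := by
        rw [← ENNReal.ofReal_one]
        apply ENNReal.ofReal_lt_ofReal_iff_of_nonneg (Real.exp_pos _).le |>.2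
        rw [Real.exp_lt_one_iff]
        linarith
      exact (tsub_pos_iff_lt.2 this).ne'
    apply ne_top_of_le_ne_top hsum
    apply ENNReal.tsum_le_tsum
    intro n
    exact (hbound n).trans (hgeo n)
  have hae := measure_eq_zero_iff_ae_notMem.1 hlimsup
  filter_upwards [hae] with x hx hxIoc
  have hnot : ¬ ∃ᶠ n in atTop, x ∈ E n := by
    rwa [← Filter.mem_limsup_iff_frequently_mem]
  rw [Filter.not_frequently] at hnot
  filter_upwards [hnot] with n hn
  by_contra h
  push_neg at h
  exact hn ⟨hxIoc, h⟩

lemma ae_tendsto_Ioc :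
    ∀ᵐ x : ℝ, x ∈ Set.Ioc (0:ℝ) 1 → Tendsto (fun n : ℕ => Sn n x / n) atTop atTop := by
  have hall : ∀ᵐ x : ℝ, ∀ M : ℕ, x ∈ Set.Ioc (0:ℝ) 1 → ∀ᶠ n in atTop, (M:ℝ)*n < Sn n x :=
    (ae_all_iff).2 (fun M => ae_eventually_gt M)
  filter_upwards [hall] with x hx hxIoc
  rw [tendsto_atTop]
  intro b
  have hM := hx ⌈b⌉₊ hxIoc
  have hb : b ≤ ((⌈b⌉₊ : ℕ):ℝ) := Nat.le_ceil b
  filter_upwards [hM, eventually_ge_atTop 1] with n hn hn1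
  have hn0 : (0:ℝ) < (n:ℝ) := by exact_mod_cast hn1
  rw [le_div_iff₀ hn0]
  nlinarith

/-- For Lebesgue-almost every real number `r`, the arithmetic mean
`(a₁(r) + ⋯ + aₙ(r))/n` of the partial quotients
`aₖ(r) = ⌊1 / (T^{k-1} {r})⌋` of the continued fraction expansion of `r`
tends to infinity. -/
theorem ae_arithmetic_mean_partial_quotients_tendsto_atTop :
    ∀ᵐ r : ℝ ∂MeasureTheory.volume,
      Filter.Tendsto
        (fun n : ℕ =>
          (∑ k ∈ Finset.range n, ((⌊(gaussMap^[k] (Int.fract r))⁻¹⌋ : ℝ))) / n)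
        Filter.atTop Filter.atTop := by
  set G : ℝ → Prop := fun x => Tendsto (fun n : ℕ => Sn n x / n) atTop atTop with hG_def
  set N : Set ℝ := {x : ℝ | ¬ (x ∈ Set.Ioc (0:ℝ) 1 → G x)} with hN_def
  have hN : volume N = 0 := ae_tendsto_Ioc
  rw [ae_iff]
  have hgoal : {r : ℝ | ¬ Tendsto
      (fun n : ℕ => (∑ k ∈ Finset.range n, ((⌊(gaussMap^[k] (Int.fract r))⁻¹⌋ : ℝ))) / n)
      atTop atTop} = {r : ℝ | ¬ G (Int.fract r)} := rfl
  rw [hgoal]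
  have hbig : volume ((Set.range (Int.cast : ℤ → ℝ))
      ∪ ⋃ k : ℤ, (fun y : ℝ => y + (k:ℝ)) ⁻¹' N) = 0 := by
    apply measure_union_null
    · exact (Set.countable_range _).measure_zero volume
    · apply measure_iUnion_null
      intro k
      rw [measure_preimage_add_right]
      exact hN
  apply measure_mono_null _ hbig
  · intro r hr
    simp only [Set.mem_setOf_eq] at hr
    by_cases h0 : Int.fract r = 0
    · left
      have : r = (⌊r⌋ : ℝ) := by
        have := Int.fract_add_floor r
        rw [h0] at this
        simpa using this.symm
      exact ⟨⌊r⌋, this.symm⟩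
    · right
      have hfr : Int.fract r ∈ Set.Ioc (0:ℝ) 1 := by
        constructor
        · exact lt_of_le_of_ne (Int.fract_nonneg r) (Ne.symm h0)
        · exact (Int.fract_lt_one r).le
      refine Set.mem_iUnion.2 ⟨-⌊r⌋, ?_⟩
      show r + ((-⌊r⌋ : ℤ):ℝ) ∈ N
      have heq : r + ((-⌊r⌋ : ℤ):ℝ) = Int.fract r := by
        rw [Int.fract]
        push_cast
        ring
      rw [heq, hN_def]
      intro hcon
      exact hr (hcon hfr)
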